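/- Let d be a positive natural number, let (E_k)_{k ∈ K} be a finite family of effects in Matrix (Fin d) (Fin d) ℂ (each E_k and 1 − E_k positive semidefinite) with ∑_k E_k = 1, and let B ∈ Matrix (Fin d) (Fin d) ℂ be an effect. If both ∑_k E_k^{1/2} B E_k^{1/2} = B and ∑_k E_k^{1/2} B² E_k^{1/2} = B², then E_k B = B E_k for all k ∈ K. -/

import Mathlib

open scoped ComplexOrder Matrix

open Matrix in
lemma sum_conjTranspose_mul_self_eq_zero {d : ℕ} {K : Type} [Fintype K]
    (C : K → Matrix (Fin d) (Fin d) ℂ)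
    (h : ∑ k, (C k)ᴴ * C k = 0) : ∀ k, C k = 0 := by
  intro k
  have hvec : ∀ x : Fin d → ℂ, C k *ᵥ x = 0 := by
    intro x
    have hm : (∑ j, (C j)ᴴ * C j) *ᵥ x = ∑ j, ((C j)ᴴ * C j) *ᵥ x :=
      map_sum (Matrix.mulVec.addMonoidHomLeft x) _ _
    have hdot : star x ⬝ᵥ (∑ j, ((C j)ᴴ * C j) *ᵥ x)
        = ∑ j, star x ⬝ᵥ (((C j)ᴴ * C j) *ᵥ x) := by
      simp only [dotProduct, Finset.sum_apply, Finset.mul_sum]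
      exact Finset.sum_comm
    have h0 : ∑ j, star x ⬝ᵥ (((C j)ᴴ * C j) *ᵥ x) = 0 := by
      rw [← hdot, ← hm, h]; simp
    have hrw : ∀ j, star x ⬝ᵥ (((C j)ᴴ * C j) *ᵥ x)
        = star (C j *ᵥ x) ⬝ᵥ (C j *ᵥ x) := by
      intro j
      rw [← Matrix.mulVec_mulVec, Matrix.dotProduct_mulVec, Matrix.vecMul_conjTranspose,
        star_star]
    have hnn : ∀ j, 0 ≤ star x ⬝ᵥ (((C j)ᴴ * C j) *ᵥ x) := by
      intro j; rw [hrw j]; exact dotProduct_star_self_nonneg _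
    have hz := (Fintype.sum_eq_zero_iff_of_nonneg hnn).mp h0
    have hk0 : star x ⬝ᵥ (((C k)ᴴ * C k) *ᵥ x) = 0 := congrFun hz k
    rw [hrw k] at hk0
    exact dotProduct_star_self_eq_zero.mp hk0
  ext i j
  have := congrFun (hvec (Pi.single j 1)) i
  simpa [Matrix.mulVec_single] using this

/-- The positive semidefinite square root of a positive semidefinite matrix
(the definition `Matrix.PosSemidef.sqrt` of the older Mathlib, since removed). -/
noncomputable def Matrix.PosSemidef.sqrt {n 𝕜 : Type*} [Fintype n] [RCLike 𝕜] [DecidableEq n]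
    {A : Matrix n n 𝕜} (hA : A.PosSemidef) : Matrix n n 𝕜 :=
  hA.1.eigenvectorUnitary.1 * Matrix.diagonal ((↑) ∘ (√·) ∘ hA.1.eigenvalues) *
  (star hA.1.eigenvectorUnitary : Matrix n n 𝕜)

theorem Matrix.PosSemidef.posSemidef_sqrt_isHermitian' {n : Type*} [Fintype n] [DecidableEq n]
    {A : Matrix n n ℂ} (hA : A.PosSemidef) : (hA.sqrt)ᴴ = hA.sqrt := by
  unfold Matrix.PosSemidef.sqrt
  simp [Matrix.conjTranspose_mul, Matrix.diagonal_conjTranspose, Matrix.mul_assoc,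
    Matrix.star_eq_conjTranspose, Pi.star_def, Function.comp_def, Complex.star_def]

theorem Matrix.PosSemidef.sqrt_mul_self' {n : Type*} [Fintype n] [DecidableEq n]
    {A : Matrix n n ℂ} (hA : A.PosSemidef) : hA.sqrt * hA.sqrt = A := by
  unfold Matrix.PosSemidef.sqrt
  set U := hA.1.eigenvectorUnitary
  have hU : (star U : Matrix n n ℂ) * U.1 = 1 := Matrix.UnitaryGroup.star_mul_self U
  have hD : Matrix.diagonal (((↑) ∘ (√·) ∘ hA.1.eigenvalues) : n → ℂ) *
      Matrix.diagonal ((↑) ∘ (√·) ∘ hA.1.eigenvalues)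
      = Matrix.diagonal (RCLike.ofReal ∘ hA.1.eigenvalues) := by
    rw [Matrix.diagonal_mul_diagonal]
    congr 1; funext i
    simp only [Function.comp_apply]
    rw [← Complex.ofReal_mul, Real.mul_self_sqrt (hA.eigenvalues_nonneg i)]
    rfl
  calc _ = U.1 * (Matrix.diagonal (((↑) ∘ (√·) ∘ hA.1.eigenvalues) : n → ℂ) *
      ((star U : Matrix n n ℂ) * U.1) * Matrix.diagonal ((↑) ∘ (√·) ∘ hA.1.eigenvalues))
      * (star U : Matrix n n ℂ) := by simp only [Matrix.mul_assoc]; rfl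
    _ = A := by
      rw [hU, Matrix.mul_one, hD]
      conv_rhs => rw [hA.1.spectral_theorem]
      rw [Unitary.conjStarAlgAut_apply]

open Matrix in
/-- Generalized Lüders theorem under assumption (III): if the nonselective
generalized Lüders operation of the discrete observable `(E_k)` leaves both `B`
and `B²` undisturbed, then every `E_k` commutes with `B`. -/
theorem generalized_lueders_squared
    (d : ℕ) (hd : 0 < d) (K : Type) [Fintype K]
    (E : K → Matrix (Fin d) (Fin d) ℂ)
    (hE : ∀ k, (E k).PosSemidef) (hE' : ∀ k, (1 - E k).PosSemidef)
    (hsum : ∑ k, E k = 1)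
    (B : Matrix (Fin d) (Fin d) ℂ) (hB : B.PosSemidef) (hB' : (1 - B).PosSemidef)
    (h1 : ∑ k, (hE k).sqrt * B * (hE k).sqrt = B)
    (h2 : ∑ k, (hE k).sqrt * (B * B) * (hE k).sqrt = B * B) :
    ∀ k, E k * B = B * E k := by
  set S : K → Matrix (Fin d) (Fin d) ℂ := fun k => (hE k).sqrt with hSdef
  have hBH : Bᴴ = B := hB.isHermitian
  have hSH : ∀ k, (S k)ᴴ = S k := fun k => (hE k).posSemidef_sqrt_isHermitian'
  have hSS : ∀ k, S k * S k = E k := fun k => (hE k).sqrt_mul_self'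
  set C : K → Matrix (Fin d) (Fin d) ℂ := fun k => S k * B - B * S k with hCdef
  have expand : ∀ k, (C k)ᴴ * C k =
      B * (S k * S k) * B - B * (S k * B * S k) - (S k * B * S k) * B
        + S k * (B * B) * S k := by
    intro k
    simp only [hCdef, Matrix.conjTranspose_sub, Matrix.conjTranspose_mul, hSH, hBH]
    noncomm_ring
  have key : ∑ k, (C k)ᴴ * C k = 0 := by
    have hs : ∑ k, (C k)ᴴ * C k =
        B * (∑ k, S k * S k) * B - B * (∑ k, S k * B * S k)
          - (∑ k, S k * B * S k) * B + ∑ k, S k * (B * B) * S k := by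
      simp only [expand, Finset.sum_add_distrib, Finset.sum_sub_distrib,
        ← Finset.sum_mul, ← Finset.mul_sum]
    rw [hs]
    simp only [hSS, hsum, show ∑ k, S k * B * S k = B from h1,
      show ∑ k, S k * (B * B) * S k = B * B from h2]
    noncomm_ring
  have hC0 : ∀ k, C k = 0 := sum_conjTranspose_mul_self_eq_zero C key
  intro k
  have hSB : S k * B = B * S k := by
    have := hC0 k
    simpa [hCdef, sub_eq_zero] using this
  calc E k * B = S k * S k * B := by rw [hSS]
    _ = S k * (S k * B) := by rw [Matrix.mul_assoc]
    _ = S k * (B * S k) := by rw [hSB]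
    _ = (S k * B) * S k := by rw [Matrix.mul_assoc]
    _ = B * S k * S k := by rw [hSB]
    _ = B * (S k * S k) := by rw [Matrix.mul_assoc]
    _ = B * E k := by rw [hSS]
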